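/- Let k ≥ 1. The power functions satisfy the following Poisson bracket relations identically on ℝ^{2(k+2)}: {P_1, P_i} = P_{i+1} for 2 ≤ i ≤ k+1, {P_1, P_{k+2}} = 0, and {P_i, P_j} = 0 for all 2 ≤ i < j ≤ k+2. -/

import Mathlib

/-- The power functions `P_1, …, P_{k+2}` (0-indexed: `powerFn k a` is `P_{a+1}`) on the
phase space `T^* J^k ≅ ℝ^{k+2} × ℝ^{k+2}`.  Configuration coordinates are indexed so that
`q 0 = x`, `q i = u_{k+1-i}` for `1 ≤ i ≤ k`, `q (k+1) = y`, and `p i` is the momentum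
conjugate to `q i` (so `p 0 = p_x`, `p 1 = p_k`, …, `p k = p_1`, `p (k+1) = p_y`).
Then `P_1 = p_x + u_1 p_y + ∑_{i=2}^k u_i p_{i-1} = p 0 + ∑_{j=1}^{k} q j * p (j+1)`,
and `P_m = p (m-1)` for `2 ≤ m ≤ k+2`. -/
noncomputable def powerFn (k : ℕ) (a : Fin (k + 2))
    (z : (Fin (k + 2) → ℝ) × (Fin (k + 2) → ℝ)) : ℝ :=
  if a = ⟨0, by omega⟩ then
    z.2 ⟨0, by omega⟩ + ∑ j : Fin k, z.1 ⟨j.1 + 1, by omega⟩ * z.2 ⟨j.1 + 2, by omega⟩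
  else z.2 a

/-- The canonical Poisson bracket `{f,g} = ∑_q (∂f/∂q ∂g/∂p_q − ∂f/∂p_q ∂g/∂q)` on
`ℝ^{2(k+2)} = (Fin (k+2) → ℝ) × (Fin (k+2) → ℝ)` (first factor: configuration coordinates,
second factor: conjugate momenta). -/
noncomputable def poissonBracket (k : ℕ)
    (f g : ((Fin (k + 2) → ℝ) × (Fin (k + 2) → ℝ)) → ℝ)
    (z : (Fin (k + 2) → ℝ) × (Fin (k + 2) → ℝ)) : ℝ :=
  ∑ i : Fin (k + 2),
    (fderiv ℝ f z ((Pi.single i 1 : Fin (k + 2) → ℝ), (0 : Fin (k + 2) → ℝ)) *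
        fderiv ℝ g z ((0 : Fin (k + 2) → ℝ), (Pi.single i 1 : Fin (k + 2) → ℝ)) -
      fderiv ℝ f z ((0 : Fin (k + 2) → ℝ), (Pi.single i 1 : Fin (k + 2) → ℝ)) *
        fderiv ℝ g z ((Pi.single i 1 : Fin (k + 2) → ℝ), (0 : Fin (k + 2) → ℝ)))

namespace PFaux

variable {k : ℕ}

noncomputable def pQ (i : Fin (k+2)) : ((Fin (k+2) → ℝ) × (Fin (k+2) → ℝ)) →L[ℝ] ℝ :=
  (ContinuousLinearMap.proj i).comp (ContinuousLinearMap.fst ℝ _ _)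

noncomputable def pP (i : Fin (k+2)) : ((Fin (k+2) → ℝ) × (Fin (k+2) → ℝ)) →L[ℝ] ℝ :=
  (ContinuousLinearMap.proj i).comp (ContinuousLinearMap.snd ℝ _ _)

@[simp] lemma pQ_apply (i : Fin (k+2)) (v : (Fin (k+2) → ℝ) × (Fin (k+2) → ℝ)) :
    pQ i v = v.1 i := rfl

@[simp] lemma pP_apply (i : Fin (k+2)) (v : (Fin (k+2) → ℝ) × (Fin (k+2) → ℝ)) :
    pP i v = v.2 i := rfl

lemma fderiv_powerFn_ne (a : Fin (k+2)) (ha : a ≠ ⟨0, by omega⟩)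
    (z : (Fin (k+2) → ℝ) × (Fin (k+2) → ℝ)) :
    fderiv ℝ (powerFn k a) z = pP a := by
  have ha' : a ≠ 0 := by simpa using ha
  have h : powerFn k a = pP a := by
    funext w; simp [powerFn, ha', pP]
  rw [h]; exact (pP a).fderiv

lemma fderiv_powerFn_zero (z : (Fin (k+2) → ℝ) × (Fin (k+2) → ℝ)) :
    fderiv ℝ (powerFn k ⟨0, by omega⟩) z
      = pP ⟨0, by omega⟩ + ∑ j : Fin k,
          (z.1 ⟨j.1+1, by omega⟩ • pP ⟨j.1+2, by omega⟩
            + z.2 ⟨j.1+2, by omega⟩ • pQ ⟨j.1+1, by omega⟩) := by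
  have heq : powerFn k ⟨0, by omega⟩
      = fun w => pP (k := k) ⟨0, by omega⟩ w
          + ∑ j : Fin k, pQ (k := k) ⟨j.1+1, by omega⟩ w * pP (k := k) ⟨j.1+2, by omega⟩ w := by
    funext w; simp [powerFn, pQ, pP]
  have h : HasFDerivAt (powerFn k ⟨0, by omega⟩)
      (pP ⟨0, by omega⟩ + ∑ j : Fin k,
          (z.1 ⟨j.1+1, by omega⟩ • pP ⟨j.1+2, by omega⟩
            + z.2 ⟨j.1+2, by omega⟩ • pQ ⟨j.1+1, by omega⟩)) z := by
    rw [heq]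
    exact (pP _).hasFDerivAt.add
      (HasFDerivAt.fun_sum fun j _ => ((pQ _).hasFDerivAt.mul (pP _).hasFDerivAt))
  exact h.fderiv

lemma bracket_pp (a b : Fin (k+2)) (ha : a ≠ ⟨0, by omega⟩) (hb : b ≠ ⟨0, by omega⟩)
    (z : (Fin (k+2) → ℝ) × (Fin (k+2) → ℝ)) :
    poissonBracket k (powerFn k a) (powerFn k b) z = 0 := by
  simp [poissonBracket, fderiv_powerFn_ne a ha, fderiv_powerFn_ne b hb]

lemma bracket_one (a : Fin (k+2)) (ha : a ≠ ⟨0, by omega⟩)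
    (z : (Fin (k+2) → ℝ) × (Fin (k+2) → ℝ)) :
    poissonBracket k (powerFn k ⟨0, by omega⟩) (powerFn k a) z
      = ∑ j : Fin k, z.2 ⟨j.1+2, by omega⟩
          * (if a = (⟨j.1+1, by omega⟩ : Fin (k+2)) then (1:ℝ) else 0) := by
  simp only [poissonBracket, fderiv_powerFn_zero, fderiv_powerFn_ne a ha,
    ContinuousLinearMap.add_apply, ContinuousLinearMap.coe_sum', Finset.sum_apply,
    ContinuousLinearMap.smul_apply, pP_apply, pQ_apply, Pi.zero_apply, smul_eq_mul,
    mul_zero, zero_mul, add_zero, zero_add, sub_zero, Pi.single_apply]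
  simp only [mul_ite, mul_one, mul_zero, Finset.sum_ite_eq, Finset.mem_univ, if_true]
  exact Finset.sum_congr rfl fun x _ => if_congr eq_comm rfl rfl

end PFaux

/-- the Poisson bracket relations among the power functions:
`{P_1, P_i} = P_{i+1}` for `2 ≤ i ≤ k+1`, `{P_1, P_{k+2}} = 0`, and `{P_i, P_j} = 0`
for `2 ≤ i < j ≤ k+2`, identically on `ℝ^{2(k+2)}`. -/
theorem stmt_1 (k : ℕ) (hk : 1 ≤ k) (z : (Fin (k + 2) → ℝ) × (Fin (k + 2) → ℝ)) :
    (∀ (i : ℕ) (_h2 : 2 ≤ i) (_hik : i ≤ k + 1),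
      poissonBracket k (powerFn k ⟨0, by omega⟩) (powerFn k ⟨i - 1, by omega⟩) z
        = powerFn k ⟨i, by omega⟩ z) ∧
    poissonBracket k (powerFn k ⟨0, by omega⟩) (powerFn k ⟨k + 1, by omega⟩) z = 0 ∧
    (∀ (i j : ℕ) (_h2 : 2 ≤ i) (_hij : i < j) (_hjk : j ≤ k + 2),
      poissonBracket k (powerFn k ⟨i - 1, by omega⟩) (powerFn k ⟨j - 1, by omega⟩) z = 0) := by
  refine ⟨?_, ?_, ?_⟩
  · intro i h2 hik
    rw [PFaux.bracket_one ⟨i-1, by omega⟩ (by simp only [ne_eq, Fin.mk.injEq]; omega) z]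
    rw [Finset.sum_eq_single (⟨i-2, by omega⟩ : Fin k)]
    · have h1 : (⟨i-1, by omega⟩ : Fin (k+2)) = ⟨(i-2)+1, by omega⟩ := by
        simp only [Fin.mk.injEq]; omega
      rw [if_pos h1, mul_one, powerFn, if_neg (by simp only [ne_eq, Fin.mk.injEq]; omega)]
      have h2' : (⟨i - 2 + 2, by omega⟩ : Fin (k+2)) = ⟨i, by omega⟩ := Fin.ext (show i - 2 + 2 = i by omega)
      rw [h2']
    · intro b _ hb
      rw [if_neg, mul_zero]
      simp only [Fin.mk.injEq]
      intro h
      exact hb (by simp only [Fin.ext_iff, Fin.val_mk]; omega)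
    · intro h; exact absurd (Finset.mem_univ _) h
  · rw [PFaux.bracket_one ⟨k+1, by omega⟩ (by simp only [ne_eq, Fin.mk.injEq]; omega) z]
    apply Finset.sum_eq_zero
    intro j _
    rw [if_neg, mul_zero]
    simp only [Fin.mk.injEq]
    omega
  · intro i j h2 hij hjk
    exact PFaux.bracket_pp _ _ (by simp only [ne_eq, Fin.mk.injEq]; omega)
      (by simp only [ne_eq, Fin.mk.injEq]; omega) z
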